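/- Let c > 0 and let κ(x, y) = exp(−‖x − y‖₂² / c) be the Gaussian kernel on ℝ^p. Then κ satisfies the kernel regularity property with constant η = 2/c: for all a, b, a', b' ∈ ℝ^p, (κ(a, b) − κ(a', b'))² ≤ (2/c) (‖a − a'‖₂² + ‖b − b'‖₂²). -/

import Mathlib

lemma gauss_hasDerivAt (u : ℝ) :
    HasDerivAt (fun x : ℝ => Real.exp (-x ^ 2)) (Real.exp (-u ^ 2) * (-(2 * u))) u := by
  have h : HasDerivAt (fun x : ℝ => -x ^ 2) (-(2 * u)) u := by
    simpa [Pi.neg_def] using (hasDerivAt_pow 2 u).neg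
  exact h.exp

lemma gauss_lipschitz : LipschitzWith 1 (fun x : ℝ => Real.exp (-x ^ 2)) := by
  have hdiff : Differentiable ℝ (fun x : ℝ => Real.exp (-x ^ 2)) :=
    fun u => (gauss_hasDerivAt u).differentiableAt
  apply lipschitzWith_of_nnnorm_deriv_le hdiff
  intro u
  have hd : deriv (fun x : ℝ => Real.exp (-x ^ 2)) u = Real.exp (-u ^ 2) * (-(2 * u)) :=
    (gauss_hasDerivAt u).deriv
  rw [← NNReal.coe_le_coe]
  push_cast
  rw [hd]
  have h1 : u ^ 2 + 1 ≤ Real.exp (u ^ 2) := Real.add_one_le_exp (u ^ 2)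
  have h2 : Real.exp (-u ^ 2) = (Real.exp (u ^ 2))⁻¹ := by
    rw [← Real.exp_neg]
  have h3 : 2 * |u| ≤ Real.exp (u ^ 2) := by nlinarith [sq_nonneg (|u| - 1), sq_abs u]
  have hpos := Real.exp_pos (u ^ 2)
  rw [Real.norm_eq_abs, abs_mul, abs_neg, abs_mul, Real.abs_exp, abs_two, h2]
  rw [inv_mul_le_iff₀ hpos, mul_one]
  exact h3

lemma gauss_lip_sq (u v : ℝ) :
    (Real.exp (-u ^ 2) - Real.exp (-v ^ 2)) ^ 2 ≤ (u - v) ^ 2 := by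
  have h := gauss_lipschitz.dist_le_mul u v
  simp only [Real.dist_eq, NNReal.coe_one, one_mul] at h
  have := abs_nonneg (Real.exp (-u ^ 2) - Real.exp (-v ^ 2))
  nlinarith [sq_abs (Real.exp (-u ^ 2) - Real.exp (-v ^ 2)), sq_abs (u - v),
    abs_nonneg (u - v)]

/-- the Gaussian kernel `κ(x, y) = exp(−‖x − y‖² / c)` on `ℝᵖ` satisfies the
kernel regularity property with constant `η = 2/c`. -/
theorem gaussian_kernel_regularity
    {p : ℕ} (c : ℝ) (hc : 0 < c) (a b a' b' : EuclideanSpace ℝ (Fin p)) :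
    (Real.exp (-‖a - b‖ ^ 2 / c) - Real.exp (-‖a' - b'‖ ^ 2 / c)) ^ 2 ≤
      (2 / c) * (‖a - a'‖ ^ 2 + ‖b - b'‖ ^ 2) := by
  set s := ‖a - b‖ with hs
  set t := ‖a' - b'‖ with ht
  set x := ‖a - a'‖ with hx
  set y := ‖b - b'‖ with hy
  have hcs : Real.sqrt c > 0 := Real.sqrt_pos.mpr hc
  have hsq : Real.sqrt c ^ 2 = c := Real.sq_sqrt hc.le
  have e1 : -s ^ 2 / c = -(s / Real.sqrt c) ^ 2 := by
    rw [div_pow, hsq]; ring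
  have e2 : -t ^ 2 / c = -(t / Real.sqrt c) ^ 2 := by
    rw [div_pow, hsq]; ring
  rw [e1, e2]
  have hl := gauss_lip_sq (s / Real.sqrt c) (t / Real.sqrt c)
  have h2 : (s / Real.sqrt c - t / Real.sqrt c) ^ 2 = (s - t) ^ 2 / c := by
    rw [div_sub_div_same, div_pow, hsq]
  rw [h2] at hl
  -- |s - t| ≤ x + y
  have hst : |s - t| ≤ x + y := by
    have h1 : |s - t| ≤ ‖(a - b) - (a' - b')‖ := abs_norm_sub_norm_le _ _
    have h2 : (a - b) - (a' - b') = (a - a') - (b - b') := by abel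
    rw [h2] at h1
    exact h1.trans (norm_sub_le _ _)
  have hst2 : (s - t) ^ 2 ≤ (x + y) ^ 2 := by
    have := sq_abs (s - t)
    nlinarith [abs_nonneg (s - t), norm_nonneg (a - a'), norm_nonneg (b - b')]
  have hxy : (x + y) ^ 2 ≤ 2 * (x ^ 2 + y ^ 2) := by nlinarith [sq_nonneg (x - y)]
  calc (Real.exp (-(s / Real.sqrt c) ^ 2) - Real.exp (-(t / Real.sqrt c) ^ 2)) ^ 2
      ≤ (s - t) ^ 2 / c := hl
    _ ≤ (2 * (x ^ 2 + y ^ 2)) / c := by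
        apply div_le_div_of_nonneg_right (hst2.trans hxy) hc.le
    _ = (2 / c) * (x ^ 2 + y ^ 2) := by ring
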